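/- Suppose v ≥ 3ρ and (X, B) is a PSTS(v) whose maximum partial parallel class has size ρ. Then the number of blocks b satisfies b ≤ ρ·((9ρ - 7)/2 + max{6, ⌊(v - 3ρ)/2⌋}). -/

import Mathlib

open Finset

/-- Theorem: if v ≥ 3ρ and a PSTS(v) has maximum partial parallel class of
size ρ, then b ≤ ρ((9ρ-7)/2 + max{6, ⌊(v-3ρ)/2⌋}). -/
theorem stmt_11 {X : Type*} [Fintype X] [DecidableEq X] (ρ : ℕ)
    (hv : 3 * ρ ≤ Fintype.card X)
    (B : Finset (Finset X))
    (hcard : ∀ b ∈ B, b.card = 3)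
    (hpair : ∀ x y : X, x ≠ y → (B.filter (fun b => x ∈ b ∧ y ∈ b)).card ≤ 1)
    (hex : ∃ P ⊆ B, (∀ b1 ∈ P, ∀ b2 ∈ P, b1 ≠ b2 → Disjoint b1 b2) ∧ P.card = ρ)
    (hmax : ∀ P ⊆ B, (∀ b1 ∈ P, ∀ b2 ∈ P, b1 ≠ b2 → Disjoint b1 b2) → P.card ≤ ρ) :
    (B.card : ℚ) ≤ (ρ : ℚ) * ((9 * (ρ : ℚ) - 7) / 2 +
      max 6 (((Fintype.card X - 3 * ρ) / 2 : ℕ) : ℚ)) := by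
  classical
  obtain ⟨P, hPB, hPdisj, hPcard⟩ := hex
  -- key consequence of hpair: two blocks sharing two points are equal
  have pairkey : ∀ b1 ∈ B, ∀ b2 ∈ B, ∀ x y : X, x ≠ y →
      x ∈ b1 → y ∈ b1 → x ∈ b2 → y ∈ b2 → b1 = b2 := by
    intro b1 hb1 b2 hb2 x y hxy hx1 hy1 hx2 hy2
    have h := hpair x y hxy
    rw [Finset.card_le_one] at h
    exact h b1 (by simp [Finset.mem_filter, hb1, hx1, hy1])
      b2 (by simp [Finset.mem_filter, hb2, hx2, hy2])
  -- case ρ = 0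
  rcases Nat.eq_zero_or_pos ρ with hρ0 | hρ1
  · have hBempty : B = ∅ := by
      by_contra h
      obtain ⟨b, hb⟩ := Finset.nonempty_of_ne_empty h
      have h1 : ({b} : Finset (Finset X)).card ≤ ρ := by
        apply hmax
        · simpa using hb
        · intro b1 hb1 b2 hb2 hne
          simp only [Finset.mem_singleton] at hb1 hb2
          exact absurd (hb1.trans hb2.symm) hne
      simp [hρ0] at h1
    simp [hBempty, hρ0]
  -- main case ρ ≥ 1
  set S : Finset X := P.biUnion id with hS
  have hSsub : ∀ t ∈ P, t ⊆ S := fun t ht => Finset.subset_biUnion_of_mem id ht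
  have htcard : ∀ t ∈ P, t.card = 3 := fun t ht => hcard t (hPB ht)
  have hScard : S.card = 3 * ρ := by
    have hcb := Finset.card_biUnion (s := P) (t := id) hPdisj
    rw [hS, hcb]
    simp only [id]
    rw [Finset.sum_congr rfl htcard, Finset.sum_const, hPcard, smul_eq_mul]
    ring
  -- every block meets S
  have hA : ∀ b ∈ B, (b ∩ S).Nonempty := by
    intro b hb
    by_contra hcon
    rw [Finset.not_nonempty_iff_eq_empty] at hcon
    have hbS : Disjoint b S := Finset.disjoint_iff_inter_eq_empty.mpr hcon
    have hbP : b ∉ P := by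
      intro hbP
      have : b ⊆ S := hSsub b hbP
      have hb3 : b.card = 3 := hcard b hb
      have : b ∩ S = b := Finset.inter_eq_left.mpr this
      rw [this] at hcon
      simp [hcon] at hb3
    have h1 : (insert b P).card ≤ ρ := by
      apply hmax
      · intro c hc
        rcases Finset.mem_insert.mp hc with h | h
        · exact h ▸ hb
        · exact hPB h
      · intro b1 hb1 b2 hb2 hne
        rcases Finset.mem_insert.mp hb1 with h1 | h1 <;>
          rcases Finset.mem_insert.mp hb2 with h2 | h2
        · exact absurd (h1.trans h2.symm) hne
        · exact h1 ▸ Finset.disjoint_of_subset_right (hSsub _ h2) hbS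
        · exact h2 ▸ (Finset.disjoint_of_subset_right (hSsub _ h1) hbS).symm
        · exact hPdisj b1 h1 b2 h2 hne
    rw [Finset.card_insert_of_notMem hbP, hPcard] at h1
    omega
  -- exchange lemma
  have hSwap : ∀ t ∈ P, ∀ β ∈ B, ∀ γ ∈ B, β ∩ S ⊆ t → γ ∩ S ⊆ t → β ≠ γ →
      ¬ Disjoint β γ := by
    intro t ht β hβ γ hγ hβt hγt hne hd
    have keyP : ∀ δ ∈ B, δ ∩ S ⊆ t → δ ∈ P → δ = t := by
      intro δ hδ hδt hδP
      have h1 : δ ⊆ S := hSsub δ hδP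
      have h2 : δ ⊆ t := by
        intro z hz
        exact hδt (Finset.mem_inter.mpr ⟨hz, h1 hz⟩)
      exact Finset.eq_of_subset_of_card_le h2 (by rw [htcard δ hδP, htcard t ht])
    have hβer : β ∉ P.erase t := by
      intro h
      exact (Finset.ne_of_mem_erase h) (keyP β hβ hβt (Finset.mem_of_mem_erase h))
    have hγer : γ ∉ P.erase t := by
      intro h
      exact (Finset.ne_of_mem_erase h) (keyP γ hγ hγt (Finset.mem_of_mem_erase h))
    -- disjointness with other triples
    have hdisj_er : ∀ δ ∈ B, δ ∩ S ⊆ t → ∀ t' ∈ P.erase t, Disjoint δ t' := by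
      intro δ hδ hδt t' ht'
      have ht'P : t' ∈ P := Finset.mem_of_mem_erase ht'
      have htt' : Disjoint t t' := hPdisj t ht t' ht'P (Finset.ne_of_mem_erase ht').symm
      rw [Finset.disjoint_left]
      intro z hz hz'
      have hzS : z ∈ S := hSsub t' ht'P hz'
      have : z ∈ t := hδt (Finset.mem_inter.mpr ⟨hz, hzS⟩)
      exact (Finset.disjoint_left.mp htt') this hz'
    set P' : Finset (Finset X) := insert β (insert γ (P.erase t)) with hP'
    have hP'card : P'.card = ρ + 1 := by
      rw [hP', Finset.card_insert_of_notMem (by simp [hne, hβer]),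
        Finset.card_insert_of_notMem hγer, Finset.card_erase_of_mem ht, hPcard]
      omega
    have h1 : P'.card ≤ ρ := by
      apply hmax
      · intro c hc
        rcases Finset.mem_insert.mp hc with h | h
        · exact h ▸ hβ
        rcases Finset.mem_insert.mp h with h | h
        · exact h ▸ hγ
        · exact hPB (Finset.mem_of_mem_erase h)
      · intro b1 hb1 b2 hb2 hbne
        simp only [hP', Finset.mem_insert] at hb1 hb2
        rcases hb1 with h1 | h1 | h1 <;> rcases hb2 with h2 | h2 | h2
        · exact absurd (h1.trans h2.symm) hbne
        · exact h1 ▸ h2 ▸ hd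
        · exact h1 ▸ hdisj_er β hβ hβt b2 h2
        · exact h1 ▸ h2 ▸ hd.symm
        · exact absurd (h1.trans h2.symm) hbne
        · exact h1 ▸ hdisj_er γ hγ hγt b2 h2
        · exact (h2 ▸ hdisj_er β hβ hβt b1 h1).symm
        · exact (h2 ▸ hdisj_er γ hγ hγt b1 h1).symm
        · exact hPdisj b1 (Finset.mem_of_mem_erase h1) b2 (Finset.mem_of_mem_erase h2) hbne
    omega
  -- counting
  set D : ℕ := (Fintype.card X - 3 * ρ) / 2 with hD
  set K : ℕ := max 6 D with hK
  set B1 : Finset (Finset X) := B.filter (fun b => (b ∩ S).card = 1) with hB1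
  set B2 : Finset (Finset X) := B.filter (fun b => ¬ (b ∩ S).card = 1) with hB2
  have hsplit : B1.card + B2.card = B.card :=
    Finset.card_filter_add_card_filter_not _
  -- blocks of B2 have at least 2 points in S
  have hB2two : ∀ b ∈ B2, 2 ≤ (b ∩ S).card := by
    intro b hb
    rw [hB2, Finset.mem_filter] at hb
    have h1 : 1 ≤ (b ∩ S).card := Finset.card_pos.mpr (hA b hb.1)
    omega
  have hB2B : ∀ b ∈ B2, b ∈ B := fun b hb => (Finset.mem_filter.mp hb).1
  have hpick : ∀ b ∈ B2, ∃ s ⊆ b ∩ S, s.card = 2 := by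
    intro b hb
    exact Finset.exists_subset_card_eq (hB2two b hb)
  choose! f hfsub hfcard using hpick
  set Q : Finset (Finset X) := S.powersetCard 2 \ P.biUnion (fun t => t.powersetCard 2)
    with hQ
  have hfQ : ∀ b ∈ B2 \ P, f b ∈ Q := by
    intro b hb
    obtain ⟨hbB2, hbP⟩ := Finset.mem_sdiff.mp hb
    obtain ⟨x, y, hxy, hfeq⟩ := Finset.card_eq_two.mp (hfcard b hbB2)
    have hxb : x ∈ b ∩ S := hfsub b hbB2 (hfeq ▸ by simp)
    have hyb : y ∈ b ∩ S := hfsub b hbB2 (hfeq ▸ by simp)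
    rw [hQ, Finset.mem_sdiff]
    constructor
    · rw [Finset.mem_powersetCard]
      exact ⟨(hfsub b hbB2).trans Finset.inter_subset_right, hfcard b hbB2⟩
    · intro hcon
      obtain ⟨t, htP, hft⟩ := Finset.mem_biUnion.mp hcon
      rw [Finset.mem_powersetCard] at hft
      have hxt : x ∈ t := hft.1 (hfeq ▸ by simp)
      have hyt : y ∈ t := hft.1 (hfeq ▸ by simp)
      have : b = t := pairkey b (hB2B b hbB2) t (hPB htP) x y hxy
        (Finset.mem_inter.mp hxb).1 (Finset.mem_inter.mp hyb).1 hxt hyt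
      exact hbP (this ▸ htP)
  have hfinj : Set.InjOn f ↑(B2 \ P) := by
    intro b1 hb1 b2 hb2 heq
    rw [Finset.mem_coe, Finset.mem_sdiff] at hb1 hb2
    obtain ⟨x, y, hxy, hfeq⟩ := Finset.card_eq_two.mp (hfcard b1 hb1.1)
    have hx1 : x ∈ b1 ∩ S := hfsub b1 hb1.1 (hfeq ▸ by simp)
    have hy1 : y ∈ b1 ∩ S := hfsub b1 hb1.1 (hfeq ▸ by simp)
    have hx2 : x ∈ b2 ∩ S := hfsub b2 hb2.1 (heq ▸ hfeq ▸ by simp)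
    have hy2 : y ∈ b2 ∩ S := hfsub b2 hb2.1 (heq ▸ hfeq ▸ by simp)
    exact pairkey b1 (hB2B b1 hb1.1) b2 (hB2B b2 hb2.1) x y hxy
      (Finset.mem_inter.mp hx1).1 (Finset.mem_inter.mp hy1).1
      (Finset.mem_inter.mp hx2).1 (Finset.mem_inter.mp hy2).1
  have hcardsdP : (B2 \ P).card ≤ Q.card :=
    Finset.card_le_card_of_injOn f hfQ hfinj
  have hbU : (P.biUnion (fun t => t.powersetCard 2)) ⊆ S.powersetCard 2 := by
    intro s hs
    obtain ⟨t, ht, hst⟩ := Finset.mem_biUnion.mp hs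
    rw [Finset.mem_powersetCard] at hst ⊢
    exact ⟨hst.1.trans (hSsub t ht), hst.2⟩
  have hQcard : Q.card + 3 * ρ = (3 * ρ).choose 2 := by
    have hUdisj : ∀ t ∈ P, ∀ t' ∈ P, t ≠ t' →
        Disjoint (t.powersetCard 2) (t'.powersetCard 2) := by
      intro t ht t' ht' hne
      rw [Finset.disjoint_left]
      intro s hs hs'
      rw [Finset.mem_powersetCard] at hs hs'
      have h0 : s ⊆ t ∩ t' := Finset.subset_inter hs.1 hs'.1
      have h1 : t ∩ t' = ∅ := Finset.disjoint_iff_inter_eq_empty.mp (hPdisj t ht t' ht' hne)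
      rw [h1, Finset.subset_empty] at h0
      rw [h0] at hs
      simp at hs
    have h1 : (P.biUnion (fun t => t.powersetCard 2)).card = 3 * ρ := by
      rw [Finset.card_biUnion hUdisj]
      rw [Finset.sum_congr rfl (fun t ht => by
        rw [Finset.card_powersetCard, htcard t ht])]
      rw [Finset.sum_const, hPcard]
      simp [Nat.choose]
      ring
    have h2 := Finset.card_sdiff_add_card_eq_card hbU
    rw [Finset.card_powersetCard, hScard] at h2
    rw [hQ]
    omega
  have hB2bound : B2.card ≤ ρ + Q.card := by
    have h1 := Finset.card_inter_add_card_sdiff B2 P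
    have h2 : (B2 ∩ P).card ≤ ρ := hPcard ▸ Finset.card_le_card Finset.inter_subset_right
    omega
  -- B1 analysis
  set M : X → Finset (Finset X) := fun x => B1.filter (fun b => b ∩ S = {x}) with hM
  have hMB : ∀ x, ∀ β ∈ M x, β ∈ B := by
    intro x β hβ
    exact (Finset.mem_filter.mp ((Finset.mem_filter.mp hβ).1)).1
  have hMtr : ∀ x, ∀ β ∈ M x, β ∩ S = {x} := by
    intro x β hβ
    exact (Finset.mem_filter.mp hβ).2
  have hMx : ∀ x, ∀ β ∈ M x, x ∈ β := by
    intro x β hβ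
    have := hMtr x β hβ
    have : x ∈ β ∩ S := this ▸ Finset.mem_singleton_self x
    exact (Finset.mem_inter.mp this).1
  have hMout : ∀ x, ∀ β ∈ M x, (β \ S).card = 2 := by
    intro x β hβ
    have h1 := Finset.card_inter_add_card_sdiff β S
    rw [hMtr x β hβ, Finset.card_singleton, hcard β (hMB x β hβ)] at h1
    omega
  have hMdisj : ∀ x, ∀ β ∈ M x, ∀ γ ∈ M x, β ≠ γ → Disjoint (β \ S) (γ \ S) := by
    intro x β hβ γ hγ hne
    rw [Finset.disjoint_left]
    intro z hz hz'
    rw [Finset.mem_sdiff] at hz hz'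
    have hxz : x ≠ z := fun h => hz.2 (h ▸ (Finset.mem_inter.mp
      ((hMtr x β hβ) ▸ Finset.mem_singleton_self x : x ∈ β ∩ S)).2)
    exact hne (pairkey β (hMB x β hβ) γ (hMB x γ hγ) x z hxz
      (hMx x β hβ) hz.1 (hMx x γ hγ) hz'.1)
  have hMD : ∀ x, (M x).card ≤ D := by
    intro x
    have h1 : ((M x).biUnion (fun β => β \ S)).card = 2 * (M x).card := by
      rw [Finset.card_biUnion (hMdisj x)]
      rw [Finset.sum_congr rfl (hMout x), Finset.sum_const, smul_eq_mul]
      ring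
    have h2 : ((M x).biUnion (fun β => β \ S)) ⊆ Sᶜ := by
      intro z hz
      obtain ⟨β, hβ, hzβ⟩ := Finset.mem_biUnion.mp hz
      rw [Finset.mem_compl]
      exact (Finset.mem_sdiff.mp hzβ).2
    have h3 := Finset.card_le_card h2
    rw [h1, Finset.card_compl, hScard] at h3
    rw [hD]
    omega
  have hcross : ∀ t ∈ P, ∀ x ∈ t, ∀ y ∈ t, x ≠ y → ∀ β ∈ M x, ∀ γ ∈ M y,
      ((β \ S) ∩ (γ \ S)).Nonempty := by
    intro t ht x hx y hy hxy β hβ γ hγ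
    have hβt : β ∩ S ⊆ t := by rw [hMtr x β hβ]; simpa using hx
    have hγt : γ ∩ S ⊆ t := by rw [hMtr y γ hγ]; simpa using hy
    have hne : β ≠ γ := by
      intro h
      apply hxy
      have := (hMtr x β hβ).symm.trans (h ▸ hMtr y γ hγ)
      exact Finset.singleton_injective this
    have hnd := hSwap t ht β (hMB x β hβ) γ (hMB y γ hγ) hβt hγt hne
    obtain ⟨z, hzβ, hzγ⟩ := Finset.not_disjoint_iff.mp hnd
    have hzS : z ∉ S := by
      intro hzS
      have h1 : z ∈ β ∩ S := Finset.mem_inter.mpr ⟨hzβ, hzS⟩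
      have h2 : z ∈ γ ∩ S := Finset.mem_inter.mpr ⟨hzγ, hzS⟩
      rw [hMtr x β hβ, Finset.mem_singleton] at h1
      rw [hMtr y γ hγ, Finset.mem_singleton] at h2
      exact hxy (h1 ▸ h2 ▸ rfl)
    exact ⟨z, Finset.mem_inter.mpr ⟨Finset.mem_sdiff.mpr ⟨hzβ, hzS⟩,
      Finset.mem_sdiff.mpr ⟨hzγ, hzS⟩⟩⟩
  have hXne : Nonempty X := Fintype.card_pos_iff.mp (by omega)
  have hM2 : ∀ t ∈ P, ∀ x ∈ t, ∀ y ∈ t, x ≠ y → (M y).Nonempty → (M x).card ≤ 2 := by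
    intro t ht x hx y hy hxy hMyne
    obtain ⟨γ, hγ⟩ := hMyne
    have hpickz : ∀ β ∈ M x, ∃ z, z ∈ (β \ S) ∩ (γ \ S) := by
      intro β hβ
      exact hcross t ht x hx y hy hxy β hβ γ hγ
    choose! g hg using hpickz
    have h1 : (M x).card ≤ (γ \ S).card := by
      apply Finset.card_le_card_of_injOn g
      · intro β hβ
        exact (Finset.mem_inter.mp (hg β hβ)).2
      · intro β1 hβ1 β2 hβ2 heq
        rw [Finset.mem_coe] at hβ1 hβ2
        by_contra hne
        have hd := hMdisj x β1 hβ1 β2 hβ2 hne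
        have hz1 : g β1 ∈ β1 \ S := (Finset.mem_inter.mp (hg β1 hβ1)).1
        have hz2 : g β2 ∈ β2 \ S := (Finset.mem_inter.mp (hg β2 hβ2)).1
        exact (Finset.disjoint_left.mp hd) hz1 (heq ▸ hz2)
    rw [hMout y γ hγ] at h1
    exact h1
  -- per-triple bound
  have hpert : ∀ t ∈ P, ∑ x ∈ t, (M x).card ≤ K := by
    intro t ht
    by_cases hc : ∃ x ∈ t, ∃ y ∈ t, x ≠ y ∧ (M x).Nonempty ∧ (M y).Nonempty
    · obtain ⟨x1, hx1, y1, hy1, hxy1, hMx1, hMy1⟩ := hc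
      have hb : ∀ x ∈ t, (M x).card ≤ 2 := by
        intro x hx
        by_cases hxx : x = x1
        · exact hM2 t ht x hx y1 hy1 (hxx ▸ hxy1) hMy1
        · exact hM2 t ht x hx x1 hx1 hxx hMx1
      calc ∑ x ∈ t, (M x).card ≤ ∑ _x ∈ t, 2 := Finset.sum_le_sum hb
        _ = 6 := by rw [Finset.sum_const, htcard t ht]; norm_num
        _ ≤ K := le_max_left 6 D
    · push_neg at hc
      by_cases hne : ∃ x0 ∈ t, (M x0).Nonempty
      · obtain ⟨x0, hx0, hMx0⟩ := hne
        have hz : ∀ x ∈ t, x ≠ x0 → (M x).card = 0 := by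
          intro x hx hxx
          have h1 := hc x0 hx0 x hx (fun h => hxx h.symm) hMx0
          rw [Finset.card_eq_zero, ← Finset.not_nonempty_iff_eq_empty]
          exact Finset.not_nonempty_iff_eq_empty.mpr h1
        rw [Finset.sum_eq_single_of_mem x0 hx0 hz]
        exact le_trans (hMD x0) (le_max_right 6 D)
      · push_neg at hne
        have : ∑ x ∈ t, (M x).card = 0 := by
          apply Finset.sum_eq_zero
          intro x hx
          rw [Finset.card_eq_zero, ← Finset.not_nonempty_iff_eq_empty]
          exact Finset.not_nonempty_iff_eq_empty.mpr (hne x hx)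
        omega
  -- bound on B1
  have hB1bound : B1.card ≤ ρ * K := by
    have hsub : B1 ⊆ P.biUnion (fun t => t.biUnion M) := by
      intro b hb
      have hbB : b ∈ B := (Finset.mem_filter.mp hb).1
      have h1 : (b ∩ S).card = 1 := (Finset.mem_filter.mp hb).2
      obtain ⟨x, hx⟩ := Finset.card_eq_one.mp h1
      have hxS : x ∈ S := by
        have : x ∈ b ∩ S := hx ▸ Finset.mem_singleton_self x
        exact (Finset.mem_inter.mp this).2
      rw [hS] at hxS
      obtain ⟨t, ht, hxt⟩ := Finset.mem_biUnion.mp hxS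
      exact Finset.mem_biUnion.mpr ⟨t, ht, Finset.mem_biUnion.mpr
        ⟨x, hxt, Finset.mem_filter.mpr ⟨hb, hx⟩⟩⟩
    calc B1.card ≤ (P.biUnion (fun t => t.biUnion M)).card := Finset.card_le_card hsub
      _ ≤ ∑ t ∈ P, (t.biUnion M).card := Finset.card_biUnion_le
      _ ≤ ∑ t ∈ P, ∑ x ∈ t, (M x).card :=
          Finset.sum_le_sum (fun t _ => Finset.card_biUnion_le)
      _ ≤ ∑ _t ∈ P, K := Finset.sum_le_sum hpert
      _ = ρ * K := by rw [Finset.sum_const, hPcard, smul_eq_mul]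
  -- assemble
  have hch : 2 * (3 * ρ).choose 2 = 3 * ρ * (3 * ρ - 1) := by
    obtain ⟨m, hm⟩ : ∃ m, 3 * ρ = m + 1 := ⟨3 * ρ - 1, by omega⟩
    rw [hm, Nat.choose_two_right, Nat.succ_sub_one]
    have he : Even ((m + 1) * m) := by rw [mul_comm]; exact Nat.even_mul_succ_self m
    exact Nat.mul_div_cancel' he.two_dvd
  have htot : B.card ≤ ρ * K + ρ + Q.card := by omega
  have hKcast : ((K : ℕ) : ℚ) = max 6 ((D : ℕ) : ℚ) := by
    rw [hK, Nat.cast_max]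
    norm_num
  rw [← hKcast]
  have h1 : (B.card : ℚ) ≤ (ρ : ℚ) * K + ρ + Q.card := by exact_mod_cast htot
  have h2 : (Q.card : ℚ) + 3 * ρ = ((3 * ρ).choose 2 : ℚ) := by exact_mod_cast hQcard
  have h3 : 2 * ((3 * ρ).choose 2 : ℚ) = 3 * ρ * (3 * ρ - 1) := by
    have h4 : (1 : ℕ) ≤ 3 * ρ := by omega
    have h5 := hch
    have h6 : ((2 * (3 * ρ).choose 2 : ℕ) : ℚ) = ((3 * ρ * (3 * ρ - 1) : ℕ) : ℚ) := by
      exact_mod_cast congrArg (Nat.cast : ℕ → ℚ) h5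
    push_cast [Nat.cast_sub h4] at h6
    linarith
  nlinarith [h1, h2, h3, sq_nonneg ((ρ : ℚ))]
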